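/- arXiv:1506.01726 — 4 statements merged into one kernel-verified Lean document; each statement's English description precedes it below -/
import Mathlib

section
/- For any Gauss diagram D of a virtual knot or link, the reduced virtual knot group Ḡ_D is isomorphic to the extended group EG_D, via the change of variables sending v to s and each short-arc generator a of Ḡ_D to the element a' s, where a' denotes the corresponding short-arc generator of EG_D (i.e. a' = a v⁻¹). -/
noncomputable section

open scoped Classical

/-- A Gauss diagram: a finite set of chords, each with an arrowhead (`Sum.inl c`,
the under-crossing passage) and an arrowtail (`Sum.inr c`, the over-crossing passage)
and a sign (`true` = +1, `false` = −1); the endpoints are arranged on a disjoint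
union of oriented circles, recorded by the successor permutation `next`. -/
structure GaussDiagram where
  Chord : Type
  [chordFintype : Fintype Chord]
  [chordDecEq : DecidableEq Chord]
  next : Equiv.Perm (Chord ⊕ Chord)
  sign : Chord → Bool

attribute [instance] GaussDiagram.chordFintype GaussDiagram.chordDecEq

namespace GaussDiagram

variable (D : GaussDiagram)

/-- Endpoints of the diagram; `Sum.inl c` is the arrowhead of `c`, `Sum.inr c` its arrowtail. -/
abbrev Endpoint : Type := D.Chord ⊕ D.Chord

/-- Short arcs, indexed by their terminal endpoint: the arc `x` runs from the
preceding endpoint to the endpoint `x`. -/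
abbrev Arc : Type := D.Endpoint

def head (c : D.Chord) : D.Endpoint := Sum.inl c
def tail (c : D.Chord) : D.Endpoint := Sum.inr c

/-- incoming under-crossing short arc at a chord -/
def ui (c : D.Chord) : D.Arc := Sum.inl c
/-- outgoing under-crossing short arc at a chord -/
def uo (c : D.Chord) : D.Arc := D.next (Sum.inl c)
/-- incoming over-crossing short arc at a chord -/
def oi (c : D.Chord) : D.Arc := Sum.inr c
/-- outgoing over-crossing short arc at a chord -/
def oo (c : D.Chord) : D.Arc := D.next (Sum.inr c)

/-- the sign of a chord, as an integer -/
def sgn (c : D.Chord) : ℤ := if D.sign c then 1 else -1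

/-! ### The reduced virtual knot group -/

/-- Generators of the reduced virtual knot group: one generator for each short arc,
together with the extra generator `v = Sum.inr ()`. -/
abbrev RGen : Type := D.Arc ⊕ Unit

/-- the generator `v` -/
def gv : FreeGroup D.RGen := FreeGroup.of (Sum.inr ())
/-- the generator of a short arc -/
def ga (x : D.Arc) : FreeGroup D.RGen := FreeGroup.of (Sum.inl x)

/-- Relator at the over passage of a chord: for a positive chord with incoming over-arc
`b = oi` and outgoing over-arc `d = oo`, the relation `d = v b v⁻¹`; for a negative chord
the same with incoming and outgoing arcs interchanged. -/
def redRelOver (c : D.Chord) : FreeGroup D.RGen :=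
  if D.sign c then
    D.ga (D.oo c) * (D.gv * D.ga (D.oi c) * (D.gv)⁻¹)⁻¹
  else
    D.ga (D.oi c) * (D.gv * D.ga (D.oo c) * (D.gv)⁻¹)⁻¹

/-- Relator at the under passage of a chord: for a positive chord with incoming under-arc
`a = ui`, incoming over-arc `b = oi`, outgoing under-arc `c = uo`, the relation
`c = b v⁻¹ a v b⁻¹`; for a negative chord the same with incoming and outgoing arcs
interchanged. -/
def redRelUnder (c : D.Chord) : FreeGroup D.RGen :=
  if D.sign c then
    D.ga (D.uo c) *
      (D.ga (D.oi c) * (D.gv)⁻¹ * D.ga (D.ui c) * D.gv * (D.ga (D.oi c))⁻¹)⁻¹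
  else
    D.ga (D.ui c) *
      (D.ga (D.oo c) * (D.gv)⁻¹ * D.ga (D.uo c) * D.gv * (D.ga (D.oo c))⁻¹)⁻¹

def redRels : Set (FreeGroup D.RGen) :=
  {r | ∃ c : D.Chord, r = D.redRelOver c ∨ r = D.redRelUnder c}

/-- The reduced virtual knot group `Ḡ_D` of a Gauss diagram. -/
def RedGroup : Type := PresentedGroup D.redRels

instance : Group D.RedGroup := inferInstanceAs (Group (PresentedGroup D.redRels))

/-- the image of a generator in the reduced virtual knot group -/
def redOf (x : D.RGen) : D.RedGroup := PresentedGroup.of x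

/-! ### The extended group -/

/-- Generators of the extended group: one for each short arc, plus `s = Sum.inr ()`. -/
abbrev EGen : Type := D.Arc ⊕ Unit

def es : FreeGroup D.EGen := FreeGroup.of (Sum.inr ())
def ea (x : D.Arc) : FreeGroup D.EGen := FreeGroup.of (Sum.inl x)

/-- Relator of the extended group at the over passage of a chord: `d = s b s⁻¹`
(incoming and outgoing arcs interchanged for negative chords). -/
def extRelOver (c : D.Chord) : FreeGroup D.EGen :=
  if D.sign c then
    D.ea (D.oo c) * (D.es * D.ea (D.oi c) * (D.es)⁻¹)⁻¹
  else
    D.ea (D.oi c) * (D.es * D.ea (D.oo c) * (D.es)⁻¹)⁻¹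

/-- Relator of the extended group at the under passage of a chord: `c = b a s b⁻¹ s⁻¹`
(incoming and outgoing arcs interchanged for negative chords). -/
def extRelUnder (c : D.Chord) : FreeGroup D.EGen :=
  if D.sign c then
    D.ea (D.uo c) *
      (D.ea (D.oi c) * D.ea (D.ui c) * D.es * (D.ea (D.oi c))⁻¹ * (D.es)⁻¹)⁻¹
  else
    D.ea (D.ui c) *
      (D.ea (D.oo c) * D.ea (D.uo c) * D.es * (D.ea (D.oo c))⁻¹ * (D.es)⁻¹)⁻¹

def extRels : Set (FreeGroup D.EGen) :=
  {r | ∃ c : D.Chord, r = D.extRelOver c ∨ r = D.extRelUnder c}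

/-- The extended group `EG_D` of Silver–Williams. -/
def ExtGroup : Type := PresentedGroup D.extRels

instance : Group D.ExtGroup := inferInstanceAs (Group (PresentedGroup D.extRels))

def extOf (x : D.EGen) : D.ExtGroup := PresentedGroup.of x

end GaussDiagram


/-! ### Auxiliary material for the proof -/

namespace GaussDiagram

lemma mk_rel_eq_one {α : Type*} (rels : Set (FreeGroup α)) {r : FreeGroup α}
    (h : r ∈ rels) : PresentedGroup.mk rels r = 1 :=
  (QuotientGroup.eq_one_iff r).mpr (Subgroup.subset_normalClosure h)

variable (D : GaussDiagram)

/-- the forward map on generators -/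
def fwd : D.RGen → D.ExtGroup
  | Sum.inl x => D.extOf (Sum.inl x) * D.extOf (Sum.inr ())
  | Sum.inr _ => D.extOf (Sum.inr ())

/-- the backward map on generators -/
def bwd : D.EGen → D.RedGroup
  | Sum.inl x => D.redOf (Sum.inl x) * (D.redOf (Sum.inr ()))⁻¹
  | Sum.inr _ => D.redOf (Sum.inr ())

lemma extOf_eq (x : D.EGen) :
    (PresentedGroup.mk D.extRels) (FreeGroup.of x) = D.extOf x := rfl

lemma redOf_eq (x : D.RGen) :
    (PresentedGroup.mk D.redRels) (FreeGroup.of x) = D.redOf x := rfl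

def mkE : FreeGroup D.EGen →* D.ExtGroup where
  toFun := PresentedGroup.mk D.extRels
  map_one' := rfl
  map_mul' := fun _ _ => rfl

def mkR : FreeGroup D.RGen →* D.RedGroup where
  toFun := PresentedGroup.mk D.redRels
  map_one' := rfl
  map_mul' := fun _ _ => rfl

lemma mkE_of (x : D.EGen) : D.mkE (FreeGroup.of x) = D.extOf x := rfl

lemma mkR_of (x : D.RGen) : D.mkR (FreeGroup.of x) = D.redOf x := rfl

lemma mkE_rel {r : FreeGroup D.EGen} (h : r ∈ D.extRels) : D.mkE r = 1 :=
  mk_rel_eq_one D.extRels h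

lemma mkR_rel {r : FreeGroup D.RGen} (h : r ∈ D.redRels) : D.mkR r = 1 :=
  mk_rel_eq_one D.redRels h

lemma fwd_rels : ∀ r ∈ D.redRels, FreeGroup.lift D.fwd r = 1 := by
  rintro r ⟨c, hc | hc⟩ <;> subst hc
  · have ho := D.mkE_rel (r := D.extRelOver c) ⟨c, Or.inl rfl⟩
    unfold extRelOver at ho
    unfold redRelOver
    rcases hs : D.sign c <;> simp only [hs, if_true, if_false, Bool.false_eq_true] at ho ⊢ <;>
      simp only [ea, es, ga, gv, map_mul, map_inv, FreeGroup.lift_apply_of,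
        mul_inv_eq_one, D.extOf_eq, D.mkE_of] at ho ⊢ <;>
      · simp only [fwd]
        rw [ho]; group
  · have hu := D.mkE_rel (r := D.extRelUnder c) ⟨c, Or.inr rfl⟩
    unfold extRelUnder at hu
    unfold redRelUnder
    rcases hs : D.sign c <;> simp only [hs, if_true, if_false, Bool.false_eq_true] at hu ⊢ <;>
      simp only [ea, es, ga, gv, map_mul, map_inv, FreeGroup.lift_apply_of,
        mul_inv_eq_one, D.extOf_eq, D.mkE_of] at hu ⊢ <;>
      · simp only [fwd]
        rw [hu]; group

lemma bwd_rels : ∀ r ∈ D.extRels, FreeGroup.lift D.bwd r = 1 := by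
  rintro r ⟨c, hc | hc⟩ <;> subst hc
  · have ho := D.mkR_rel (r := D.redRelOver c) ⟨c, Or.inl rfl⟩
    unfold redRelOver at ho
    unfold extRelOver
    rcases hs : D.sign c <;> simp only [hs, if_true, if_false, Bool.false_eq_true] at ho ⊢ <;>
      simp only [ea, es, ga, gv, map_mul, map_inv, FreeGroup.lift_apply_of,
        mul_inv_eq_one, D.redOf_eq, D.mkR_of] at ho ⊢ <;>
      · simp only [bwd]
        rw [ho]; group
  · have hu := D.mkR_rel (r := D.redRelUnder c) ⟨c, Or.inr rfl⟩
    unfold redRelUnder at hu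
    unfold extRelUnder
    rcases hs : D.sign c <;> simp only [hs, if_true, if_false, Bool.false_eq_true] at hu ⊢ <;>
      simp only [ea, es, ga, gv, map_mul, map_inv, FreeGroup.lift_apply_of,
        mul_inv_eq_one, D.redOf_eq, D.mkR_of] at hu ⊢ <;>
      · simp only [bwd]
        rw [hu]; group

end GaussDiagram

set_option maxHeartbeats 1600000 in
/-- For any Gauss diagram `D`, the reduced virtual knot group is
isomorphic to the extended group, via the change of variables sending `v` to `s` and
each short-arc generator `a` to `a' s`. -/
theorem redGroup_iso_extGroup (D : GaussDiagram) :
    ∃ φ : D.RedGroup ≃* D.ExtGroup,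
      φ (D.redOf (Sum.inr ())) = D.extOf (Sum.inr ()) ∧
      ∀ x : D.Arc, φ (D.redOf (Sum.inl x)) =
        D.extOf (Sum.inl x) * D.extOf (Sum.inr ()) := by

  classical
  let phi : D.RedGroup →* D.ExtGroup := PresentedGroup.toGroup D.fwd_rels
  let psi : D.ExtGroup →* D.RedGroup := PresentedGroup.toGroup D.bwd_rels
  have h1 : psi.comp phi = MonoidHom.id D.RedGroup := by
    apply PresentedGroup.ext
    intro x
    show psi (phi (PresentedGroup.of x)) = PresentedGroup.of x
    have : phi (PresentedGroup.of x) = D.fwd x := PresentedGroup.toGroup.of D.fwd_rels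
    rw [this]
    cases x with
    | inl a =>
        show psi (D.extOf (Sum.inl a) * D.extOf (Sum.inr ())) = _
        rw [map_mul]
        have h1 : psi (D.extOf (Sum.inl a)) = D.bwd (Sum.inl a) :=
          PresentedGroup.toGroup.of D.bwd_rels
        have h2 : psi (D.extOf (Sum.inr ())) = D.bwd (Sum.inr ()) :=
          PresentedGroup.toGroup.of D.bwd_rels
        rw [h1, h2]
        show D.redOf (Sum.inl a) * (D.redOf (Sum.inr ()))⁻¹ * D.redOf (Sum.inr ()) = _
        group
        rfl
    | inr u =>
        exact PresentedGroup.toGroup.of D.bwd_rels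
  have h2 : phi.comp psi = MonoidHom.id D.ExtGroup := by
    apply PresentedGroup.ext
    intro x
    show phi (psi (PresentedGroup.of x)) = PresentedGroup.of x
    have : psi (PresentedGroup.of x) = D.bwd x := PresentedGroup.toGroup.of D.bwd_rels
    rw [this]
    cases x with
    | inl a =>
        show phi (D.redOf (Sum.inl a) * (D.redOf (Sum.inr ()))⁻¹) = _
        rw [map_mul, map_inv]
        have h1 : phi (D.redOf (Sum.inl a)) = D.fwd (Sum.inl a) :=
          PresentedGroup.toGroup.of D.fwd_rels
        have h2 : phi (D.redOf (Sum.inr ())) = D.fwd (Sum.inr ()) :=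
          PresentedGroup.toGroup.of D.fwd_rels
        rw [h1, h2]
        show D.extOf (Sum.inl a) * D.extOf (Sum.inr ()) * (D.extOf (Sum.inr ()))⁻¹ = _
        group
        rfl
    | inr u =>
        exact PresentedGroup.toGroup.of D.fwd_rels
  refine ⟨MonoidHom.toMulEquiv phi psi h1 h2, ?_, ?_⟩
  · show phi (D.redOf (Sum.inr ())) = _
    exact PresentedGroup.toGroup.of D.fwd_rels
  · intro x
    show phi (D.redOf (Sum.inl x)) = _
    exact PresentedGroup.toGroup.of D.fwd_rels
end
end

section
/- For any Gauss diagram D of a virtual knot or link, the generalized Alexander polynomial and the reduced virtual Alexander polynomial are related by G_D(s, t) = H̄_D(st, s) up to multiplication by a unit of ℤ[s^{±1}, t^{±1}]; that is, there exist integers a, b and a sign ± such that G_D(s, t) = ± s^a t^b · H̄_D(st, s). -/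
noncomputable section

open scoped Classical

def FoxPair (R : Type) [CommRing R] : Type := Rˣ × R

namespace FoxPair

variable {R : Type} [CommRing R]

instance : Mul (FoxPair R) := ⟨fun a b => (a.1 * b.1, a.2 + (a.1 : R) * b.2)⟩
instance : One (FoxPair R) := ⟨(1, 0)⟩
instance : Inv (FoxPair R) := ⟨fun a => (a.1⁻¹, -(((a.1⁻¹ : Rˣ) : R) * a.2))⟩

@[simp] lemma mul_def (a b : FoxPair R) :
    a * b = (a.1 * b.1, a.2 + (a.1 : R) * b.2) := rfl
@[simp] lemma one_def : (1 : FoxPair R) = ((1 : Rˣ), (0 : R)) := rfl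
@[simp] lemma inv_def (a : FoxPair R) :
    a⁻¹ = (a.1⁻¹, -(((a.1⁻¹ : Rˣ) : R) * a.2)) := rfl

instance : Group (FoxPair R) where
  mul_assoc a b c := by
    show ((a.1 * b.1) * c.1, (a.2 + (a.1 : R) * b.2) + ((a.1 * b.1 : Rˣ) : R) * c.2) =
      (a.1 * (b.1 * c.1), a.2 + (a.1 : R) * (b.2 + (b.1 : R) * c.2))
    simp [Prod.ext_iff, Units.val_mul, mul_assoc, mul_add, add_assoc]
  one_mul a := by
    show ((1 : Rˣ) * a.1, (0 : R) + ((1 : Rˣ) : R) * a.2) = (a.1, a.2)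
    simp [Prod.ext_iff]
  mul_one a := by
    show (a.1 * 1, a.2 + (a.1 : R) * 0) = (a.1, a.2)
    simp [Prod.ext_iff]
  inv_mul_cancel a := by
    show (a.1⁻¹ * a.1, -(((a.1⁻¹ : Rˣ) : R) * a.2) + ((a.1⁻¹ : Rˣ) : R) * a.2) = ((1 : Rˣ), (0 : R))
    simp [Prod.ext_iff]

end FoxPair

def foxHom {α : Type} [DecidableEq α] {R : Type} [CommRing R] (φ : α → Rˣ) (x : α) :
    FreeGroup α →* FoxPair R :=
  FreeGroup.lift fun y => ((φ y, if y = x then (1 : R) else 0) : FoxPair R)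

/-- The Fox derivative `∂w/∂x`, evaluated under the evaluation `φ` of the generators. -/
def fox {α : Type} [DecidableEq α] {R : Type} [CommRing R] (φ : α → Rˣ) (x : α)
    (w : FreeGroup α) : R :=
  (foxHom φ x w).2

abbrev LaurentTwo : Type := MonoidAlgebra ℤ (Multiplicative (ℤ × ℤ))

def LaurentTwo.unitOf : Multiplicative (ℤ × ℤ) →* LaurentTwoˣ :=
  (MonoidAlgebra.of ℤ (Multiplicative (ℤ × ℤ))).toHomUnits

def LaurentTwo.U1 : LaurentTwoˣ := LaurentTwo.unitOf (Multiplicative.ofAdd (1, 0))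
def LaurentTwo.U2 : LaurentTwoˣ := LaurentTwo.unitOf (Multiplicative.ofAdd (0, 1))

def LaurentTwo.mono (a b : ℤ) : LaurentTwo :=
  MonoidAlgebra.of ℤ (Multiplicative (ℤ × ℤ)) (Multiplicative.ofAdd (a, b))

def expHom {R : Type} [CommRing R] (a b : Rˣ) : Multiplicative (ℤ × ℤ) →* R where
  toFun g := ((a ^ (Multiplicative.toAdd g).1 * b ^ (Multiplicative.toAdd g).2 : Rˣ) : R)
  map_one' := by simp
  map_mul' x y := by
    simp only [toAdd_mul, Prod.fst_add, Prod.snd_add, zpow_add, Units.val_mul]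
    ring

/-- the ring homomorphism `ℤ[t^{±1}, v^{±1}] → R` sending `t ↦ a` and `v ↦ b` -/
def ringEval {R : Type} [CommRing R] (a b : Rˣ) : LaurentTwo →+* R :=
  ((MonoidAlgebra.lift ℤ R (Multiplicative (ℤ × ℤ))) (expHom a b)).toRingHom

namespace GaussDiagram

variable (D : GaussDiagram)

/-- The relator of the reduced virtual knot group expressing the short arc `x` as the
outgoing arc of the unique crossing passage where it originates.  If `x` is the
outgoing under-arc of a chord `c` (i.e. `x = uo c`) the relation is
`uo = oi · v⁻¹ · ui · v · oi⁻¹` for a positive chord and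
`uo = v · oo⁻¹ · ui · oo · v⁻¹` for a negative one; if `x` is the outgoing over-arc
(`x = oo c`) it is `oo = v · oi · v⁻¹` for a positive chord and `oo = v⁻¹ · oi · v`
for a negative one. -/
def redRowRel (x : D.Arc) : FreeGroup D.RGen :=
  match D.next.symm x with
  | Sum.inl c =>
      if D.sign c then
        D.ga x * (D.ga (D.oi c) * (D.gv)⁻¹ * D.ga (D.ui c) * D.gv * (D.ga (D.oi c))⁻¹)⁻¹
      else
        D.ga x * (D.gv * (D.ga (D.oo c))⁻¹ * D.ga (D.ui c) * D.ga (D.oo c) * (D.gv)⁻¹)⁻¹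
  | Sum.inr c =>
      if D.sign c then
        D.ga x * (D.gv * D.ga (D.oi c) * (D.gv)⁻¹)⁻¹
      else
        D.ga x * ((D.gv)⁻¹ * D.ga (D.oi c) * D.gv)⁻¹

/-- evaluation of the generators of the reduced group: every short arc generator is
sent to `t` and `v` is sent to `v` -/
def redEval : D.RGen → LaurentTwoˣ :=
  Sum.elim (fun _ => LaurentTwo.U1) (fun _ => LaurentTwo.U2)

/-- the Fox–Jacobian matrix of the reduced virtual knot group with respect to the
short-arc generators -/
def redMatrix : Matrix D.Arc D.Arc LaurentTwo :=
  fun i j => fox D.redEval (Sum.inl j) (D.redRowRel i)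

/-- The reduced virtual Alexander polynomial `H̄_D(t, v)`. -/
def HbarPoly : LaurentTwo := D.redMatrix.det

/-- The relator of the extended group expressing the short arc `x` as the outgoing arc
of the unique crossing passage where it originates. -/
def extRowRel (x : D.Arc) : FreeGroup D.EGen :=
  match D.next.symm x with
  | Sum.inl c =>
      if D.sign c then
        D.ea x * (D.ea (D.oi c) * D.ea (D.ui c) * D.es * (D.ea (D.oi c))⁻¹ * (D.es)⁻¹)⁻¹
      else
        D.ea x * ((D.ea (D.oo c))⁻¹ * D.ea (D.ui c) * D.es * D.ea (D.oo c) * (D.es)⁻¹)⁻¹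
  | Sum.inr c =>
      if D.sign c then
        D.ea x * (D.es * D.ea (D.oi c) * (D.es)⁻¹)⁻¹
      else
        D.ea x * ((D.es)⁻¹ * D.ea (D.oi c) * D.es)⁻¹

/-- evaluation of the generators of the extended group: every short arc generator is
sent to `t` (the second variable) and `s` is sent to `s` (the first variable) -/
def extEval : D.EGen → LaurentTwoˣ :=
  Sum.elim (fun _ => LaurentTwo.U2) (fun _ => LaurentTwo.U1)

def extMatrix : Matrix D.Arc D.Arc LaurentTwo :=
  fun i j => fox D.extEval (Sum.inl j) (D.extRowRel i)

/-- The generalized Alexander polynomial `G_D(s, t)`. -/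
def GPoly : LaurentTwo := D.extMatrix.det

end GaussDiagram



namespace LaurentTwo

@[simp] lemma mono_mul (a b c d : ℤ) :
    mono a b * mono c d = mono (a+c) (b+d) := by
  simp [mono, ← map_mul, ← ofAdd_add, Prod.mk_add_mk]

lemma mono_pow (a b : ℤ) (n : ℕ) : mono a b ^ n = mono (n*a) (n*b) := by
  induction n with
  | zero => simp [mono]; rfl
  | succ n ih => rw [pow_succ, ih, mono_mul]; congr 1 <;> push_cast <;> ring

@[simp] lemma mono_zero : mono 0 0 = 1 := by
  have h : Multiplicative.ofAdd ((0:ℤ),(0:ℤ)) = 1 := rfl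
  rw [mono, h, map_one]

lemma unitOf_val (g : Multiplicative (ℤ × ℤ)) :
    ((unitOf g : LaurentTwoˣ) : LaurentTwo) = MonoidAlgebra.of ℤ (Multiplicative (ℤ × ℤ)) g :=
  rfl

@[simp] lemma val_U1 : ((U1 : LaurentTwoˣ) : LaurentTwo) = mono 1 0 := rfl
@[simp] lemma val_U2 : ((U2 : LaurentTwoˣ) : LaurentTwo) = mono 0 1 := rfl

@[simp] lemma val_U1_inv : (((U1)⁻¹ : LaurentTwoˣ) : LaurentTwo) = mono (-1) 0 := by
  rw [U1, ← map_inv, unitOf_val]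
  norm_num [← ofAdd_neg, mono, Prod.ext_iff]

@[simp] lemma val_U2_inv : (((U2)⁻¹ : LaurentTwoˣ) : LaurentTwo) = mono 0 (-1) := by
  rw [U2, ← map_inv, unitOf_val]
  norm_num [← ofAdd_neg, mono, Prod.ext_iff]

lemma unitOf_zpow (g : Multiplicative (ℤ × ℤ)) (n : ℤ) :
    (unitOf g) ^ n = unitOf (g ^ n) := (map_zpow unitOf g n).symm

@[simp] lemma sigma_mono (a b : ℤ) :
    ringEval (U1 * U2) U1 (mono a b) = mono (a+b) a := by
  have h1 : (U1 * U2 : LaurentTwoˣ) = unitOf (Multiplicative.ofAdd (1,1)) := by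
    rw [U1, U2, ← map_mul, ← ofAdd_add]; norm_num
  have : ringEval (U1 * U2) U1 (mono a b)
      = (((U1*U2) ^ a * U1 ^ b : LaurentTwoˣ) : LaurentTwo) := by
    simp [ringEval, mono, MonoidAlgebra.lift_of, expHom]
  rw [this, h1, U1, unitOf_zpow, unitOf_zpow, ← map_mul, unitOf_val]
  have : (Multiplicative.ofAdd ((1:ℤ),(1:ℤ))) ^ a * (Multiplicative.ofAdd ((1:ℤ),(0:ℤ))) ^ b
      = Multiplicative.ofAdd (a+b, a) := by
    rw [← ofAdd_zsmul, ← ofAdd_zsmul, ← ofAdd_add]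
    congr 1
    simp [Prod.ext_iff, Prod.fst_add, Prod.snd_add, Prod.smul_mk, smul_eq_mul]
  rw [this]; rfl

end LaurentTwo

section FoxLemmas
variable {α : Type} [DecidableEq α] {R : Type} [CommRing R]

def fstHom : FoxPair R →* Rˣ where
  toFun a := a.1
  map_one' := rfl
  map_mul' _ _ := rfl

lemma foxHom_fst (φ : α → Rˣ) (x : α) (w : FreeGroup α) :
    (foxHom φ x w).1 = FreeGroup.lift φ w := by
  have h : (fstHom.comp (foxHom φ x)) = (FreeGroup.lift φ) := by
    apply FreeGroup.ext_hom
    intro y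
    simp [fstHom, foxHom, FreeGroup.lift_apply_of]
    exact congrArg Prod.fst (FreeGroup.lift_apply_of (β := FoxPair R) (f := fun y => ((φ y, if y = x then (1 : R) else 0) : FoxPair R)))
  exact congrFun (congrArg DFunLike.coe h) w

@[simp] lemma fox_of (φ : α → Rˣ) (x y : α) :
    fox φ x (FreeGroup.of y) = if y = x then (1:R) else 0 := by
  simp [fox, foxHom, FreeGroup.lift_apply_of]
  exact congrArg Prod.snd (FreeGroup.lift_apply_of (β := FoxPair R) (f := fun y => ((φ y, if y = x then (1 : R) else 0) : FoxPair R)))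

@[simp] lemma fox_mul (φ : α → Rˣ) (x : α) (u w : FreeGroup α) :
    fox φ x (u * w) = fox φ x u + ((FreeGroup.lift φ u : Rˣ) : R) * fox φ x w := by
  simp [fox, map_mul, foxHom_fst]

@[simp] lemma fox_inv (φ : α → Rˣ) (x : α) (w : FreeGroup α) :
    fox φ x w⁻¹ = -((((FreeGroup.lift φ w)⁻¹ : Rˣ) : R)) * fox φ x w := by
  simp [fox, map_inv, foxHom_fst, neg_mul]

end FoxLemmas

lemma extMatrix_eq (D : GaussDiagram) (i j : D.Arc) :
    D.extMatrix i j = ringEval (LaurentTwo.U1 * LaurentTwo.U2) LaurentTwo.U1 (D.redMatrix i j) := by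
  rcases h : D.next.symm i with c | c <;> rcases hs : D.sign c <;>
  · simp only [GaussDiagram.extMatrix, GaussDiagram.redMatrix, GaussDiagram.extRowRel,
      GaussDiagram.redRowRel, h, hs, if_true, if_false, Bool.false_eq_true]
    simp [GaussDiagram.ea, GaussDiagram.es, GaussDiagram.ga, GaussDiagram.gv,
      GaussDiagram.extEval, GaussDiagram.redEval]
    simp only [apply_ite (ringEval (LaurentTwo.U1 * LaurentTwo.U2) LaurentTwo.U1),
      map_neg, map_zero, LaurentTwo.sigma_mono]
    split_ifs <;> ring_nf <;> norm_num [LaurentTwo.mono_pow, LaurentTwo.mono_mul] <;> ring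

/-- `G_D(s, t) = H̄_D(st, s)` up to multiplication by a unit
`± s^a t^b` of `ℤ[s^{±1}, t^{±1}]`. -/
theorem gPoly_eq_hbarPoly (D : GaussDiagram) :
    ∃ (a b : ℤ) (z : ℤˣ),
      D.GPoly = ((z : ℤ) : LaurentTwo) * LaurentTwo.mono a b *
        ringEval (LaurentTwo.U1 * LaurentTwo.U2) LaurentTwo.U1 D.HbarPoly := by
  refine ⟨0, 0, 1, ?_⟩
  have hM : D.extMatrix =
      (ringEval (LaurentTwo.U1 * LaurentTwo.U2) LaurentTwo.U1).mapMatrix D.redMatrix := by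
    funext i j
    simp only [RingHom.mapMatrix_apply, Matrix.map_apply, extMatrix_eq]
  simp only [GaussDiagram.GPoly, GaussDiagram.HbarPoly,
    RingHom.map_det, ← hM, LaurentTwo.mono_zero, Units.val_one, Int.cast_one, one_mul, mul_one]
end
end

section
/- Let p ≥ 2 and let D be a Gauss diagram of a virtual knot or link admitting a mod p Alexander numbering. Then the quotient of the reduced virtual knot group Ḡ_D by the normal closure of v^p is isomorphic to the free product G_D * (ℤ/pℤ). -/
noncomputable section

open scoped Classical

namespace GaussDiagram

variable (D : GaussDiagram)

/-- A mod `p` Alexander numbering of a Gauss diagram (`p = 0` meaning integer valued,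
  via `ZMod 0 = ℤ`): at each chord, if `a → c` is the passage of the strand crossed from
  left to right by the other strand `b → d`, then `λ(a) = λ(d)` and
  `λ(b) = λ(c) = λ(a) − 1`.  For a positive chord the strand crossed from left to right
  is the over strand, for a negative chord it is the under strand. -/
def IsAlexanderNumbering (p : ℕ) (lam : D.Arc → ZMod p) : Prop :=
  ∀ c : D.Chord,
    if D.sign c then
      lam (D.oi c) = lam (D.uo c) ∧ lam (D.ui c) = lam (D.oo c) ∧
        lam (D.ui c) = lam (D.oi c) - 1
    else
      lam (D.ui c) = lam (D.oo c) ∧ lam (D.oi c) = lam (D.uo c) ∧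
        lam (D.oi c) = lam (D.ui c) - 1

/-! ### The knot group -/

/-- Two endpoints generate the same long arc when they are separated only by an
arrowtail: the short arc ending at an arrowtail and the following short arc belong to
the same long arc. -/
def tailRel : D.Endpoint → D.Endpoint → Prop :=
  fun x y => ∃ c : D.Chord, x = Sum.inr c ∧ y = D.next (Sum.inr c)

/-- Long arcs: maximal arcs between consecutive arrowheads, i.e. equivalence classes of
short arcs under merging across arrowtails. -/
def LongArc : Type := Quotient (Relation.EqvGen.setoid D.tailRel)

/-- the long arc containing a given short arc -/
def la (x : D.Endpoint) : D.LongArc := Quotient.mk _ x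

/-- Wirtinger relator of a chord: `c = b^ε a b^{−ε}` where `a` is the incoming and `c`
the outgoing long arc at the arrowhead, and `b` is the long arc through the arrowtail. -/
def knotRel (c : D.Chord) : FreeGroup D.LongArc :=
  FreeGroup.of (D.la (D.next (Sum.inl c))) *
    (FreeGroup.of (D.la (Sum.inr c)) ^ D.sgn c * FreeGroup.of (D.la (Sum.inl c)) *
        FreeGroup.of (D.la (Sum.inr c)) ^ (-D.sgn c))⁻¹

def knotRels : Set (FreeGroup D.LongArc) := Set.range D.knotRel

/-- The knot group `G_D` of a Gauss diagram (Wirtinger presentation on long arcs). -/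
def KnotGroup : Type := PresentedGroup D.knotRels

instance : Group D.KnotGroup := inferInstanceAs (Group (PresentedGroup D.knotRels))

end GaussDiagram

/-! ### Auxiliary constructions for the proof -/

namespace RedAux

open GaussDiagram Monoid

variable (D : GaussDiagram) (p : ℕ)

/-- The quotient group in question. -/
abbrev Q := D.RedGroup ⧸ Subgroup.normalClosure {(D.redOf (Sum.inr ())) ^ p}

/-- The target free product. -/
abbrev T := Monoid.Coprod D.KnotGroup (Multiplicative (ZMod p))

/-- projection from the free group on the generators to `Q`. -/
def piQ : FreeGroup D.RGen →* Q D p :=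
  (QuotientGroup.mk' _).comp
    (PresentedGroup.mk D.redRels : FreeGroup D.RGen →* D.RedGroup)

lemma piQ_surjective : Function.Surjective (piQ D p) :=
  (QuotientGroup.mk'_surjective _).comp (PresentedGroup.mk_surjective _)

lemma piQ_rel {r : FreeGroup D.RGen} (hr : r ∈ D.redRels) : piQ D p r = 1 := by
  have h1 : (PresentedGroup.mk D.redRels r : D.RedGroup) = 1 :=
    (QuotientGroup.eq_one_iff _).mpr (Subgroup.subset_normalClosure hr)
  show (QuotientGroup.mk' (G := D.RedGroup) (Subgroup.normalClosure {(D.redOf (Sum.inr ())) ^ p})) (PresentedGroup.mk D.redRels r) = 1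
  rw [h1]; exact map_one _

/-- image of a short-arc generator in `Q` -/
def A (x : D.Arc) : Q D p := piQ D p (D.ga x)

/-- image of `v` in `Q` -/
def V : Q D p := piQ D p D.gv

lemma V_pow : V D p ^ p = 1 := by
  have h0 : V D p ^ p = piQ D p (D.gv ^ p) := (map_pow _ _ _).symm
  rw [h0]
  show (QuotientGroup.mk' (G := D.RedGroup) (Subgroup.normalClosure {(D.redOf (Sum.inr ())) ^ p})) ((PresentedGroup.mk D.redRels) (D.gv ^ p)) = 1
  have h2 : (PresentedGroup.mk D.redRels) (D.gv ^ p) = (D.redOf (Sum.inr ())) ^ p := by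
    rw [map_pow]; rfl
  rw [h2, QuotientGroup.mk'_apply]
  exact (QuotientGroup.eq_one_iff _).mpr
    (Subgroup.subset_normalClosure (Set.mem_singleton _))

/-- the homomorphism `ZMod p →+ Additive Q` sending `1` to `v` -/
def chiAdd : ZMod p →+ Additive (Q D p) :=
  ZMod.lift p ⟨zmultiplesHom _ (Additive.ofMul (V D p)), by
    show ((p : ℤ) • Additive.ofMul (V D p)) = 0
    rw [natCast_zsmul]
    show Additive.ofMul (V D p ^ p) = 0
    rw [V_pow]; rfl⟩

/-- the homomorphism `Multiplicative (ZMod p) →* Q` sending the generator to `v` -/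
def chi : Multiplicative (ZMod p) →* Q D p :=
  AddMonoidHom.toMultiplicativeLeft (chiAdd D p)

/-- the `ZMod p`-indexed powers of `v` in `Q` -/
def ch (a : ZMod p) : Q D p := chi D p (Multiplicative.ofAdd a)

lemma ch_intCast (n : ℤ) : ch D p ((n : ZMod p)) = V D p ^ n := by
  show Additive.toMul (chiAdd D p (Multiplicative.toAdd (Multiplicative.ofAdd ((n : ZMod p))))) = _
  rw [toAdd_ofAdd]
  show Additive.toMul (ZMod.lift p ⟨zmultiplesHom _ (Additive.ofMul (V D p)), _⟩ ((n : ZMod p))) = _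
  rw [ZMod.lift_coe]
  show Additive.toMul (n • Additive.ofMul (V D p)) = _
  rw [toMul_zsmul, toMul_ofMul]

lemma ch_add (a b : ZMod p) : ch D p (a + b) = ch D p a * ch D p b := by
  unfold ch
  rw [ofAdd_add, map_mul]

lemma ch_one : ch D p 1 = V D p := by
  have := ch_intCast D p 1
  rw [Int.cast_one, zpow_one] at this
  exact this

lemma ch_sub_one (a : ZMod p) : ch D p (a - 1) = ch D p a * (V D p)⁻¹ := by
  have : ch D p a = ch D p (a - 1) * V D p := by
    rw [← ch_one D p, ← ch_add]; ring_nf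
  rw [this]; group

lemma ch_neg (a : ZMod p) : ch D p (-a) = (ch D p a)⁻¹ := by
  have : ch D p (-a) * ch D p a = 1 := by
    rw [← ch_add, neg_add_cancel]
    have := ch_intCast D p 0
    rw [Int.cast_zero, zpow_zero] at this
    exact this
  exact eq_inv_of_mul_eq_one_left this

/-! The relations of the reduced group, in `Q`. -/

lemma relQ_over_pos {c : D.Chord} (hc : D.sign c = true) :
    A D p (D.oo c) = V D p * A D p (D.oi c) * (V D p)⁻¹ := by
  have h1 := piQ_rel D p (show D.redRelOver c ∈ D.redRels from ⟨c, Or.inl rfl⟩)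
  rw [GaussDiagram.redRelOver, if_pos hc] at h1
  simp only [map_mul, map_inv] at h1
  exact mul_inv_eq_one.mp h1

lemma relQ_over_neg {c : D.Chord} (hc : D.sign c = false) :
    A D p (D.oi c) = V D p * A D p (D.oo c) * (V D p)⁻¹ := by
  have h1 := piQ_rel D p (show D.redRelOver c ∈ D.redRels from ⟨c, Or.inl rfl⟩)
  rw [GaussDiagram.redRelOver, if_neg (by simp [hc])] at h1
  simp only [map_mul, map_inv] at h1
  exact mul_inv_eq_one.mp h1

lemma relQ_under_pos {c : D.Chord} (hc : D.sign c = true) :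
    A D p (D.uo c) =
      A D p (D.oi c) * (V D p)⁻¹ * A D p (D.ui c) * V D p * (A D p (D.oi c))⁻¹ := by
  have h1 := piQ_rel D p (show D.redRelUnder c ∈ D.redRels from ⟨c, Or.inr rfl⟩)
  rw [GaussDiagram.redRelUnder, if_pos hc] at h1
  simp only [map_mul, map_inv] at h1
  exact mul_inv_eq_one.mp h1

lemma relQ_under_neg {c : D.Chord} (hc : D.sign c = false) :
    A D p (D.ui c) =
      A D p (D.oo c) * (V D p)⁻¹ * A D p (D.uo c) * V D p * (A D p (D.oo c))⁻¹ := by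
  have h1 := piQ_rel D p (show D.redRelUnder c ∈ D.redRels from ⟨c, Or.inr rfl⟩)
  rw [GaussDiagram.redRelUnder, if_neg (by simp [hc])] at h1
  simp only [map_mul, map_inv] at h1
  exact mul_inv_eq_one.mp h1

variable (lam : D.Arc → ZMod p)

/-- the conjugated generators -/
def W (x : D.Arc) : Q D p := ch D p (lam x) * A D p x * (ch D p (lam x))⁻¹

variable {D p lam} (h : D.IsAlexanderNumbering p lam)

section AN
include h

lemma lam_pos {c : D.Chord} (hc : D.sign c = true) :
    lam (D.oi c) = lam (D.uo c) ∧ lam (D.ui c) = lam (D.oo c) ∧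
      lam (D.ui c) = lam (D.oi c) - 1 := by
  have := h c; rwa [if_pos hc] at this

lemma lam_neg {c : D.Chord} (hc : D.sign c = false) :
    lam (D.ui c) = lam (D.oo c) ∧ lam (D.oi c) = lam (D.uo c) ∧
      lam (D.oi c) = lam (D.ui c) - 1 := by
  have := h c; rwa [if_neg (by simp [hc])] at this

lemma W_tailRel {x y : D.Endpoint} (hxy : D.tailRel x y) :
    W D p lam x = W D p lam y := by
  obtain ⟨c, hx, hy⟩ := hxy
  subst hx; subst hy
  show W D p lam (D.oi c) = W D p lam (D.oo c)
  by_cases hc : D.sign c = true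
  · obtain ⟨h1, h2, h3⟩ := lam_pos h hc
    simp only [W]
    rw [← h2, h3, relQ_over_pos D p hc, ch_sub_one]
    group
  · replace hc : D.sign c = false := by simpa using hc
    obtain ⟨h1, h2, h3⟩ := lam_neg h hc
    have h4 : lam (D.oi c) = lam (D.oo c) - 1 := by rw [h3, h1]
    simp only [W]
    rw [h4, relQ_over_neg D p hc, ch_sub_one]
    group

/-- the conjugated generator attached to a long arc -/
def barW : D.LongArc → Q D p :=
  Quotient.lift (W D p lam) (by
    intro a b hab
    induction hab with
    | rel x y hxy => exact W_tailRel h hxy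
    | refl x => rfl
    | symm x y _ ih => exact ih.symm
    | trans x y z _ _ ih1 ih2 => exact ih1.trans ih2)

lemma barW_la (x : D.Endpoint) : barW h (D.la x) = W D p lam x := rfl

lemma W_knot_pos {c : D.Chord} (hc : D.sign c = true) :
    W D p lam (D.uo c) =
      W D p lam (D.oi c) * W D p lam (D.ui c) * (W D p lam (D.oi c))⁻¹ := by
  obtain ⟨h1, h2, h3⟩ := lam_pos h hc
  simp only [W]
  rw [← h1, h3, relQ_under_pos D p hc, ch_sub_one]
  group

lemma W_knot_neg {c : D.Chord} (hc : D.sign c = false) :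
    W D p lam (D.uo c) =
      (W D p lam (D.oi c))⁻¹ * W D p lam (D.ui c) * W D p lam (D.oi c) := by
  obtain ⟨h1, h2, h3⟩ := lam_neg h hc
  have key2 : A D p (D.uo c) =
      V D p * (A D p (D.oo c))⁻¹ * A D p (D.ui c) * A D p (D.oo c) * (V D p)⁻¹ := by
    rw [relQ_under_neg D p hc]; group
  have hoi : ch D p (lam (D.oi c)) * A D p (D.oi c) * (ch D p (lam (D.oi c)))⁻¹ =
      ch D p (lam (D.ui c)) * A D p (D.oo c) * (ch D p (lam (D.ui c)))⁻¹ := by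
    rw [h3, relQ_over_neg D p hc, ch_sub_one]
    group
  simp only [W]
  rw [hoi, ← h2, h3, key2, ch_sub_one]
  group

lemma knot_rels_lift (r : FreeGroup D.LongArc) (hr : r ∈ D.knotRels) :
    FreeGroup.lift (barW h) r = 1 := by
  obtain ⟨c, rfl⟩ := hr
  rw [GaussDiagram.knotRel]
  simp only [map_mul, map_inv, map_zpow, FreeGroup.lift_apply_of]
  rw [mul_inv_eq_one]
  show barW h (D.la (D.uo c)) =
    barW h (D.la (D.oi c)) ^ D.sgn c * barW h (D.la (D.ui c)) *
      barW h (D.la (D.oi c)) ^ (-D.sgn c)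
  simp only [barW_la]
  by_cases hc : D.sign c = true
  · rw [GaussDiagram.sgn, if_pos hc, zpow_one, zpow_neg, zpow_one]
    exact W_knot_pos h hc
  · replace hc : D.sign c = false := by simpa using hc
    rw [GaussDiagram.sgn, if_neg (by simp [hc]), zpow_neg, zpow_one, neg_neg, zpow_one]
    exact W_knot_neg h hc

/-- the homomorphism from the knot group to `Q` -/
def psi1 : D.KnotGroup →* Q D p :=
  (PresentedGroup.toGroup (knot_rels_lift h) : PresentedGroup D.knotRels →* Q D p)

lemma psi1_of (x : D.Endpoint) :
    psi1 h (PresentedGroup.of (D.la x)) = W D p lam x :=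
  PresentedGroup.toGroup.of _

/-- the homomorphism from the free product to `Q` -/
def psi : T D p →* Q D p := Coprod.lift (psi1 h) (chi D p)

end AN

/-! ### The map from `Q` to the free product -/

variable (D p lam)

/-- image of `ZMod p` in `T` -/
def iot (a : ZMod p) : T D p := Coprod.inr (Multiplicative.ofAdd a)

/-- image of a long arc generator in `T` -/
def kap (l : D.LongArc) : T D p := Coprod.inl (PresentedGroup.of l : D.KnotGroup)

lemma iot_add (a b : ZMod p) : iot D p (a + b) = iot D p a * iot D p b := by
  unfold iot; rw [ofAdd_add, map_mul]

lemma iot_zero : iot D p 0 = 1 := by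
  unfold iot; rw [ofAdd_zero, map_one]

lemma iot_neg (a : ZMod p) : iot D p (-a) = (iot D p a)⁻¹ := by
  unfold iot; rw [ofAdd_neg, map_inv]

lemma iot_sub_one (a : ZMod p) :
    iot D p (a - 1) = iot D p a * (iot D p 1)⁻¹ := by
  rw [sub_eq_add_neg, iot_add, iot_neg]

/-- generator images for the main homomorphism -/
def fT : D.RGen → T D p
  | Sum.inl a => iot D p (-lam a) * kap D p (D.la a) * iot D p (lam a)
  | Sum.inr _ => iot D p 1

lemma la_oo_eq_la_oi (c : D.Chord) : D.la (D.oo c) = D.la (D.oi c) :=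
  (Quotient.sound (Relation.EqvGen.symm _ _
    (Relation.EqvGen.rel _ _ ⟨c, rfl, rfl⟩)))

lemma kap_knotRel (c : D.Chord) :
    kap D p (D.la (D.uo c)) =
      kap D p (D.la (D.oi c)) ^ D.sgn c * kap D p (D.la (D.ui c)) *
        kap D p (D.la (D.oi c)) ^ (-D.sgn c) := by
  have h1 : (PresentedGroup.mk D.knotRels (D.knotRel c) : D.KnotGroup) = 1 :=
    (QuotientGroup.eq_one_iff _).mpr (Subgroup.subset_normalClosure ⟨c, rfl⟩)
  rw [GaussDiagram.knotRel] at h1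
  simp only [map_mul, map_inv, map_zpow] at h1
  have h2 := mul_inv_eq_one.mp h1
  have h3 := congrArg (Coprod.inl (N := Multiplicative (ZMod p))) h2
  simp only [map_mul, map_zpow] at h3
  exact h3

section AN
variable {D p lam}
include h

lemma fT_rels (r : FreeGroup D.RGen) (hr : r ∈ D.redRels) :
    FreeGroup.lift (fT D p lam) r = 1 := by
  obtain ⟨c, hc⟩ := hr
  have liftga : ∀ x : D.Arc, FreeGroup.lift (fT D p lam) (D.ga x) =
      iot D p (-lam x) * kap D p (D.la x) * iot D p (lam x) := fun x => rfl
  have liftgv : FreeGroup.lift (fT D p lam) D.gv = iot D p 1 := rfl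
  rcases hc with hc | hc <;> subst hc
  · -- over relator
    rw [GaussDiagram.redRelOver]
    by_cases hs : D.sign c = true
    · obtain ⟨h1, h2, h3⟩ := lam_pos h hs
      rw [if_pos hs]
      simp only [map_mul, map_inv, liftga, liftgv]
      rw [mul_inv_eq_one, la_oo_eq_la_oi, ← h2, h3, iot_sub_one, neg_sub,
        sub_eq_add_neg, iot_add, iot_neg]
      group
    · replace hs : D.sign c = false := by simpa using hs
      obtain ⟨h1, h2, h3⟩ := lam_neg h hs
      rw [if_neg (by simp [hs])]
      simp only [map_mul, map_inv, liftga, liftgv]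
      rw [mul_inv_eq_one, la_oo_eq_la_oi, ← h1, h3, iot_sub_one, neg_sub,
        sub_eq_add_neg, iot_add, iot_neg]
      group
  · -- under relator
    rw [GaussDiagram.redRelUnder]
    by_cases hs : D.sign c = true
    · obtain ⟨h1, h2, h3⟩ := lam_pos h hs
      have hk := kap_knotRel D p c
      rw [GaussDiagram.sgn, if_pos hs, zpow_one, zpow_neg, zpow_one] at hk
      rw [if_pos hs]
      simp only [map_mul, map_inv, liftga, liftgv]
      rw [mul_inv_eq_one, hk, ← h1, h3, iot_sub_one, neg_sub, sub_eq_add_neg,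
        iot_add, iot_neg]
      group
    · replace hs : D.sign c = false := by simpa using hs
      obtain ⟨h1, h2, h3⟩ := lam_neg h hs
      have hk := kap_knotRel D p c
      rw [GaussDiagram.sgn, if_neg (by simp [hs]), zpow_neg, zpow_one, neg_neg,
        zpow_one] at hk
      rw [if_neg (by simp [hs])]
      simp only [map_mul, map_inv, liftga, liftgv]
      rw [mul_inv_eq_one, hk, la_oo_eq_la_oi, ← h1, ← h2, h3, iot_sub_one, neg_sub,
        sub_eq_add_neg, iot_add, iot_neg]
      group

/-- the homomorphism from the reduced group to `T` -/
def phi0 : D.RedGroup →* T D p :=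
  (PresentedGroup.toGroup (fT_rels h) : PresentedGroup D.redRels →* T D p)

lemma phi0_pow_v : phi0 h ((D.redOf (Sum.inr ())) ^ p) = 1 := by
  rw [map_pow]
  have : phi0 h (D.redOf (Sum.inr ())) = iot D p 1 := PresentedGroup.toGroup.of _
  rw [this]
  unfold iot
  rw [← map_pow, ← ofAdd_nsmul, nsmul_eq_mul, mul_one, ZMod.natCast_self,
    ofAdd_zero, map_one]

/-- the homomorphism from `Q` to `T` -/
def phi : Q D p →* T D p :=
  QuotientGroup.lift _ (phi0 h)
    (Subgroup.normalClosure_le_normal (by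
      intro x hx
      rw [Set.mem_singleton_iff] at hx
      subst hx
      exact phi0_pow_v h))

lemma phi_piQ (w : FreeGroup D.RGen) :
    phi h (piQ D p w) = FreeGroup.lift (fT D p lam) w := by
  show phi h ((QuotientGroup.mk' (G := D.RedGroup) (Subgroup.normalClosure {(D.redOf (Sum.inr ())) ^ p})) (id (α := D.RedGroup) (PresentedGroup.mk D.redRels w))) = _
  rw [QuotientGroup.mk'_apply]
  show QuotientGroup.lift _ (phi0 h) _ _ = _
  rw [QuotientGroup.lift_mk]
  refine DFunLike.congr_fun (FreeGroup.ext_hom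
    ((phi0 h).comp (PresentedGroup.mk D.redRels)) (FreeGroup.lift (fT D p lam))
    (fun a => ?_)) w
  show phi0 h (PresentedGroup.mk D.redRels (FreeGroup.of a)) = _
  rw [FreeGroup.lift_apply_of]
  exact PresentedGroup.toGroup.of _

lemma phi_A (x : D.Arc) :
    phi h (A D p x) = iot D p (-lam x) * kap D p (D.la x) * iot D p (lam x) :=
  phi_piQ h (D.ga x)

lemma phi_V : phi h (V D p) = iot D p 1 :=
  phi_piQ h D.gv

lemma phi_ch (a : ZMod p) : phi h (ch D p a) = iot D p a := by
  obtain ⟨n, rfl⟩ := ZMod.intCast_surjective a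
  rw [ch_intCast, map_zpow, phi_V]
  unfold iot
  rw [← map_zpow, ← ofAdd_zsmul, zsmul_eq_mul, mul_one]

lemma phi_psi : (phi h).comp (psi h) = MonoidHom.id (T D p) := by
  apply Coprod.hom_ext
  · -- on KnotGroup
    apply PresentedGroup.ext
    intro l
    induction l using Quotient.ind with
    | _ x =>
      show phi h (psi h (Coprod.inl (PresentedGroup.of (D.la x)))) =
        Coprod.inl (PresentedGroup.of (D.la x))
      rw [show psi h (Coprod.inl (PresentedGroup.of (D.la x))) =
        psi1 h (PresentedGroup.of (D.la x)) from Coprod.lift_apply_inl _ _ _,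
        psi1_of]
      show phi h (ch D p (lam x) * A D p x * (ch D p (lam x))⁻¹) = kap D p (D.la x)
      rw [map_mul, map_mul, map_inv, phi_ch, phi_A, iot_neg]
      group
  · -- on Multiplicative (ZMod p)
    refine MonoidHom.ext fun a => ?_
    show phi h (psi h (Coprod.inr a)) = Coprod.inr a
    rw [show psi h (Coprod.inr a) = chi D p a from Coprod.lift_apply_inr _ _ _]
    have : chi D p a = ch D p (Multiplicative.toAdd a) := by
      unfold ch; rw [ofAdd_toAdd]
    rw [this, phi_ch]
    unfold iot
    rw [ofAdd_toAdd]

lemma psi_phi : (psi h).comp (phi h) = MonoidHom.id (Q D p) := by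
  have key : ((psi h).comp (phi h)).comp (piQ D p) = piQ D p := by
    apply FreeGroup.ext_hom
    rintro (x | u)
    · show psi h (phi h (A D p x)) = A D p x
      rw [phi_A, map_mul, map_mul]
      have hiot : ∀ a : ZMod p, psi h (iot D p a) = ch D p a := fun a =>
        Coprod.lift_apply_inr _ _ _
      have hkap : psi h (kap D p (D.la x)) = W D p lam x := by
        rw [show psi h (kap D p (D.la x)) = psi1 h (PresentedGroup.of (D.la x))
          from Coprod.lift_apply_inl _ _ _, psi1_of]
      rw [hiot, hiot, hkap]
      show ch D p (-lam x) *
        (ch D p (lam x) * A D p x * (ch D p (lam x))⁻¹) * ch D p (lam x) = A D p x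
      rw [ch_neg]
      group
    · show psi h (phi h (V D p)) = V D p
      rw [phi_V, show psi h (iot D p 1) = ch D p 1 from Coprod.lift_apply_inr _ _ _,
        ch_one]
  refine MonoidHom.ext fun q => ?_
  obtain ⟨w, rfl⟩ := piQ_surjective D p q
  exact DFunLike.congr_fun key w

end AN

end RedAux

/-- If a Gauss diagram admits a mod `p` Alexander numbering, `p ≥ 2`,
then the quotient of the reduced virtual knot group by the normal closure of `v^p` is
isomorphic to the free product `G_D * ℤ/p`. -/
theorem redGroup_quot_iso_of_modp (D : GaussDiagram) (p : ℕ) (hp : 2 ≤ p)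
    (lam : D.Arc → ZMod p) (h : D.IsAlexanderNumbering p lam) :
    Nonempty ((D.RedGroup ⧸
        Subgroup.normalClosure {(D.redOf (Sum.inr ())) ^ p}) ≃*
      Monoid.Coprod D.KnotGroup (Multiplicative (ZMod p))) := by
  exact ⟨MonoidHom.toMulEquiv (RedAux.phi h) (RedAux.psi h)
    (RedAux.psi_phi h) (RedAux.phi_psi h)⟩
end
end

section
/- Let D be a Gauss diagram of a virtual knot or link admitting an (integer-valued) Alexander numbering. Then the reduced virtual knot group Ḡ_D is isomorphic to the free product G_D * ℤ. -/
noncomputable section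

open scoped Classical

namespace GaussDiagramProof

open GaussDiagram Monoid

lemma mk_rel_one {α : Type*} {rels : Set (FreeGroup α)} {r : FreeGroup α} (hr : r ∈ rels) :
    PresentedGroup.mk rels r = 1 :=
  (QuotientGroup.eq_one_iff r).2 (Subgroup.subset_normalClosure hr)

variable (D : GaussDiagram)

/-- the generator `v` in the reduced group -/
def V : D.RedGroup := D.redOf (Sum.inr ())
/-- the generator of a short arc in the reduced group -/
def A (x : D.Arc) : D.RedGroup := D.redOf (Sum.inl x)

lemma mk_ga (x : D.Arc) : PresentedGroup.mk D.redRels (D.ga x) = A D x := rfl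
lemma mk_gv : PresentedGroup.mk D.redRels D.gv = V D := rfl

lemma relOver_pos (c : D.Chord) (hc : D.sign c = true) :
    A D (D.oo c) = V D * A D (D.oi c) * (V D)⁻¹ := by
  have h1 : PresentedGroup.mk D.redRels (D.redRelOver c) = 1 :=
    mk_rel_one ⟨c, Or.inl rfl⟩
  unfold GaussDiagram.redRelOver at h1
  rw [if_pos hc] at h1
  simp only [map_mul, map_inv, mk_ga, mk_gv] at h1
  exact mul_inv_eq_one.mp h1

lemma relOver_neg (c : D.Chord) (hc : D.sign c = false) :
    A D (D.oi c) = V D * A D (D.oo c) * (V D)⁻¹ := by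
  have h1 : PresentedGroup.mk D.redRels (D.redRelOver c) = 1 :=
    mk_rel_one ⟨c, Or.inl rfl⟩
  unfold GaussDiagram.redRelOver at h1
  rw [if_neg (by simp [hc])] at h1
  simp only [map_mul, map_inv, mk_ga, mk_gv] at h1
  exact mul_inv_eq_one.mp h1

lemma relUnder_pos (c : D.Chord) (hc : D.sign c = true) :
    A D (D.uo c) = A D (D.oi c) * (V D)⁻¹ * A D (D.ui c) * V D * (A D (D.oi c))⁻¹ := by
  have h1 : PresentedGroup.mk D.redRels (D.redRelUnder c) = 1 :=
    mk_rel_one ⟨c, Or.inr rfl⟩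
  unfold GaussDiagram.redRelUnder at h1
  rw [if_pos hc] at h1
  simp only [map_mul, map_inv, mk_ga, mk_gv] at h1
  exact mul_inv_eq_one.mp h1

lemma relUnder_neg (c : D.Chord) (hc : D.sign c = false) :
    A D (D.ui c) = A D (D.oo c) * (V D)⁻¹ * A D (D.uo c) * V D * (A D (D.oo c))⁻¹ := by
  have h1 : PresentedGroup.mk D.redRels (D.redRelUnder c) = 1 :=
    mk_rel_one ⟨c, Or.inr rfl⟩
  unfold GaussDiagram.redRelUnder at h1
  rw [if_neg (by simp [hc])] at h1
  simp only [map_mul, map_inv, mk_ga, mk_gv] at h1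
  exact mul_inv_eq_one.mp h1

/-- generator of a long arc in the knot group -/
def K (L : D.LongArc) : D.KnotGroup := PresentedGroup.of L

lemma knot_rel (c : D.Chord) :
    K D (D.la (D.uo c)) =
      K D (D.la (D.oi c)) ^ D.sgn c * K D (D.la (D.ui c)) *
        K D (D.la (D.oi c)) ^ (-D.sgn c) := by
  have h1 : PresentedGroup.mk D.knotRels (D.knotRel c) = 1 :=
    mk_rel_one ⟨c, rfl⟩
  unfold GaussDiagram.knotRel at h1
  simp only [map_mul, map_inv, map_zpow] at h1
  rw [mul_inv_eq_one] at h1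
  exact h1

lemma la_oo (c : D.Chord) : D.la (D.oo c) = D.la (D.oi c) :=
  (Quotient.sound (Relation.EqvGen.rel _ _ ⟨c, rfl, rfl⟩)).symm

/-! ### the map φ -/

variable (lam : D.Arc → ℤ)

/-- the target group -/
abbrev Q : Type := Monoid.Coprod D.KnotGroup (Multiplicative ℤ)

def T : Q D := Coprod.inr (Multiplicative.ofAdd 1)
def KK (L : D.LongArc) : Q D := Coprod.inl (K D L)

lemma KK_rel (c : D.Chord) :
    KK D (D.la (D.uo c)) =
      KK D (D.la (D.oi c)) ^ D.sgn c * KK D (D.la (D.ui c)) *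
        KK D (D.la (D.oi c)) ^ (-D.sgn c) := by
  simp only [KK, ← map_zpow, ← map_mul, knot_rel]

lemma KK_rel_pos (c : D.Chord) (hc : D.sign c = true) :
    KK D (D.la (D.uo c)) =
      KK D (D.la (D.oi c)) * KK D (D.la (D.ui c)) * (KK D (D.la (D.oi c)))⁻¹ := by
  have hs : D.sgn c = 1 := by simp [GaussDiagram.sgn, hc]
  rw [KK_rel, hs]; group

lemma KK_rel_neg (c : D.Chord) (hc : D.sign c = false) :
    KK D (D.la (D.uo c)) =
      (KK D (D.la (D.oi c)))⁻¹ * KK D (D.la (D.ui c)) * KK D (D.la (D.oi c)) := by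
  have hs : D.sgn c = -1 := by simp [GaussDiagram.sgn, hc]
  rw [KK_rel, hs]; group

def phiGen : D.RGen → Q D
  | Sum.inl x => T D ^ (-(lam x)) * KK D (D.la x) * T D ^ (lam x)
  | Sum.inr _ => T D

lemma phiGen_inl (x : D.Arc) :
    phiGen D lam (Sum.inl x) = T D ^ (-(lam x)) * KK D (D.la x) * T D ^ (lam x) := rfl

lemma phiGen_inr (u : Unit) : phiGen D lam (Sum.inr u) = T D := rfl

lemma hphi (h : D.IsAlexanderNumbering 0 lam) :
    ∀ r ∈ D.redRels, FreeGroup.lift (phiGen D lam) r = 1 := by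
  rintro r ⟨c, rfl | rfl⟩ <;> by_cases hb : D.sign c = true
  · -- over relator, positive chord
    have hc := h c; rw [if_pos hb] at hc
    obtain ⟨e1, e2, e3⟩ := hc
    have e2' : lam (D.ui c) = lam (D.oo c) := e2
    have e3' : lam (D.ui c) = lam (D.oi c) - 1 := e3
    have e4 : lam (D.oo c) = lam (D.oi c) - 1 := by omega
    unfold GaussDiagram.redRelOver GaussDiagram.ga GaussDiagram.gv
    rw [if_pos hb]
    simp only [map_mul, map_inv, FreeGroup.lift_apply_of, phiGen_inl, phiGen_inr]
    rw [la_oo, e4]; group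
  · -- over relator, negative chord
    have hb' : D.sign c = false := by simpa using hb
    have hc := h c; rw [if_neg (by simp [hb'])] at hc
    obtain ⟨e1, e2, e3⟩ := hc
    have e1' : lam (D.ui c) = lam (D.oo c) := e1
    have e3' : lam (D.oi c) = lam (D.ui c) - 1 := e3
    have e4 : lam (D.oi c) = lam (D.oo c) - 1 := by omega
    unfold GaussDiagram.redRelOver GaussDiagram.ga GaussDiagram.gv
    rw [if_neg (by simp [hb'] : ¬(D.sign c = true))]
    simp only [map_mul, map_inv, FreeGroup.lift_apply_of, phiGen_inl, phiGen_inr]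
    rw [la_oo, e4]; group
  · -- under relator, positive chord
    have hc := h c; rw [if_pos hb] at hc
    obtain ⟨e1, e2, e3⟩ := hc
    have e1' : lam (D.oi c) = lam (D.uo c) := e1
    have e3' : lam (D.ui c) = lam (D.oi c) - 1 := e3
    unfold GaussDiagram.redRelUnder GaussDiagram.ga GaussDiagram.gv
    rw [if_pos hb]
    simp only [map_mul, map_inv, FreeGroup.lift_apply_of, phiGen_inl, phiGen_inr]
    rw [KK_rel_pos D c hb, ← e1', e3']; group
  · -- under relator, negative chord
    have hb' : D.sign c = false := by simpa using hb
    have hc := h c; rw [if_neg (by simp [hb'])] at hc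
    obtain ⟨e1, e2, e3⟩ := hc
    have e1' : lam (D.ui c) = lam (D.oo c) := e1
    have e2' : lam (D.oi c) = lam (D.uo c) := e2
    have e3' : lam (D.oi c) = lam (D.ui c) - 1 := e3
    have e4 : lam (D.uo c) = lam (D.ui c) - 1 := by omega
    unfold GaussDiagram.redRelUnder GaussDiagram.ga GaussDiagram.gv
    rw [if_neg (by simp [hb'] : ¬(D.sign c = true))]
    simp only [map_mul, map_inv, FreeGroup.lift_apply_of, phiGen_inl, phiGen_inr]
    rw [la_oo, KK_rel_neg D c hb', ← e1', e4]; group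

/-- the homomorphism Ḡ_D → G_D ∗ ℤ -/
def phi (h : D.IsAlexanderNumbering 0 lam) : D.RedGroup →* Q D :=
  PresentedGroup.toGroup (hphi D lam h)

lemma phi_A (h : D.IsAlexanderNumbering 0 lam) (x : D.Arc) :
    phi D lam h (A D x) = T D ^ (-(lam x)) * KK D (D.la x) * T D ^ (lam x) :=
  PresentedGroup.toGroup.of _

lemma phi_V (h : D.IsAlexanderNumbering 0 lam) : phi D lam h (V D) = T D :=
  PresentedGroup.toGroup.of _

/-! ### the map ψ -/

def psiFun : D.Endpoint → D.RedGroup := fun x => V D ^ lam x * A D x * V D ^ (-lam x)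

lemma psiFun_eqvGen (h : D.IsAlexanderNumbering 0 lam) :
    ∀ x y, Relation.EqvGen D.tailRel x y → psiFun D lam x = psiFun D lam y := by
  intro x y hxy
  induction hxy with
  | rel x y hr =>
    obtain ⟨c, rfl, rfl⟩ := hr
    show psiFun D lam (D.oi c) = psiFun D lam (D.oo c)
    by_cases hb : D.sign c = true
    · have hc := h c; rw [if_pos hb] at hc
      obtain ⟨e1, e2, e3⟩ := hc
      have e2' : lam (D.ui c) = lam (D.oo c) := e2
      have e3' : lam (D.ui c) = lam (D.oi c) - 1 := e3
      have e4 : lam (D.oo c) = lam (D.oi c) - 1 := by omega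
      simp only [psiFun]
      rw [relOver_pos D c hb, e4]; group
    · have hb' : D.sign c = false := by simpa using hb
      have hc := h c; rw [if_neg (by simp [hb'])] at hc
      obtain ⟨e1, e2, e3⟩ := hc
      have e1' : lam (D.ui c) = lam (D.oo c) := e1
      have e3' : lam (D.oi c) = lam (D.ui c) - 1 := e3
      have e4 : lam (D.oi c) = lam (D.oo c) - 1 := by omega
      simp only [psiFun]
      rw [relOver_neg D c hb', e4]; group
  | refl => rfl
  | symm _ _ _ ih => exact ih.symm
  | trans _ _ _ _ _ ih1 ih2 => exact ih1.trans ih2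

def psiLA (h : D.IsAlexanderNumbering 0 lam) : D.LongArc → D.RedGroup :=
  Quotient.lift (psiFun D lam) (fun a b hab => psiFun_eqvGen D lam h a b hab)

lemma psiLA_la (h : D.IsAlexanderNumbering 0 lam) (x : D.Endpoint) :
    psiLA D lam h (D.la x) = psiFun D lam x := rfl

lemma hpsi (h : D.IsAlexanderNumbering 0 lam) :
    ∀ r ∈ D.knotRels, FreeGroup.lift (psiLA D lam h) r = 1 := by
  rintro r ⟨c, rfl⟩
  unfold GaussDiagram.knotRel
  simp only [map_mul, map_inv, map_zpow, FreeGroup.lift_apply_of]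
  rw [mul_inv_eq_one]
  show psiFun D lam (D.uo c) =
    psiFun D lam (D.oi c) ^ D.sgn c * psiFun D lam (D.ui c) *
      psiFun D lam (D.oi c) ^ (-D.sgn c)
  by_cases hb : D.sign c = true
  · have hs : D.sgn c = 1 := by simp [GaussDiagram.sgn, hb]
    have hc := h c; rw [if_pos hb] at hc
    obtain ⟨e1, e2, e3⟩ := hc
    have e1' : lam (D.oi c) = lam (D.uo c) := e1
    have e3' : lam (D.ui c) = lam (D.oi c) - 1 := e3
    simp only [psiFun, hs]
    rw [relUnder_pos D c hb, ← e1', e3']; group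
  · have hb' : D.sign c = false := by simpa using hb
    have hs : D.sgn c = -1 := by simp [GaussDiagram.sgn, hb']
    have hc := h c; rw [if_neg (by simp [hb'])] at hc
    obtain ⟨e1, e2, e3⟩ := hc
    have e1' : lam (D.ui c) = lam (D.oo c) := e1
    have e2' : lam (D.oi c) = lam (D.uo c) := e2
    have e3' : lam (D.oi c) = lam (D.ui c) - 1 := e3
    simp only [psiFun, hs]
    rw [relOver_neg D c hb', relUnder_neg D c hb', ← e2', e3']; group

/-- the homomorphism G_D ∗ ℤ → Ḡ_D -/
def psi (h : D.IsAlexanderNumbering 0 lam) : Q D →* D.RedGroup :=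
  Coprod.lift (PresentedGroup.toGroup (hpsi D lam h)) (zpowersHom _ (V D))

lemma psi_T (h : D.IsAlexanderNumbering 0 lam) : psi D lam h (T D) = V D := by
  show Coprod.lift (PresentedGroup.toGroup (hpsi D lam h)) (zpowersHom _ (V D))
      (Coprod.inr (Multiplicative.ofAdd 1)) = V D
  rw [Coprod.lift_apply_inr, zpowersHom_apply]
  simp

lemma psi_KK (h : D.IsAlexanderNumbering 0 lam) (x : D.Endpoint) :
    psi D lam h (KK D (D.la x)) = psiFun D lam x := by
  show Coprod.lift (PresentedGroup.toGroup (hpsi D lam h)) (zpowersHom _ (V D))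
      (Coprod.inl (K D (D.la x))) = psiFun D lam x
  refine (Coprod.lift_apply_inl _ _ _).trans ?_
  exact PresentedGroup.toGroup.of _

end GaussDiagramProof

/-- If a Gauss diagram admits an integral Alexander numbering then the
reduced virtual knot group splits as the free product `G_D * ℤ`. -/
theorem redGroup_iso_of_almostClassical (D : GaussDiagram)
    (lam : D.Arc → ℤ) (h : D.IsAlexanderNumbering 0 lam) :
    Nonempty (D.RedGroup ≃* Monoid.Coprod D.KnotGroup (Multiplicative ℤ)) := by
  classical
  refine ⟨MonoidHom.toMulEquiv (GaussDiagramProof.phi D lam h)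
    (GaussDiagramProof.psi D lam h) ?_ ?_⟩
  · apply PresentedGroup.ext
    intro x
    match x with
    | Sum.inl a =>
      show GaussDiagramProof.psi D lam h (GaussDiagramProof.phi D lam h
        (GaussDiagramProof.A D a)) = GaussDiagramProof.A D a
      rw [GaussDiagramProof.phi_A, map_mul, map_mul, map_zpow, map_zpow,
        GaussDiagramProof.psi_T, GaussDiagramProof.psi_KK]
      simp only [GaussDiagramProof.psiFun]
      group
    | Sum.inr u =>
      show GaussDiagramProof.psi D lam h (GaussDiagramProof.phi D lam h
        (GaussDiagramProof.V D)) = GaussDiagramProof.V D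
      rw [GaussDiagramProof.phi_V, GaussDiagramProof.psi_T]
  · apply Monoid.Coprod.hom_ext
    · apply PresentedGroup.ext
      intro L
      obtain ⟨x⟩ := L
      show GaussDiagramProof.phi D lam h (GaussDiagramProof.psi D lam h
        (GaussDiagramProof.KK D (D.la x))) = GaussDiagramProof.KK D (D.la x)
      rw [GaussDiagramProof.psi_KK]
      simp only [GaussDiagramProof.psiFun]
      rw [map_mul, map_mul, map_zpow, map_zpow, GaussDiagramProof.phi_V,
        GaussDiagramProof.phi_A]
      group
    · apply MonoidHom.ext_mint
      show GaussDiagramProof.phi D lam h (GaussDiagramProof.psi D lam h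
        (GaussDiagramProof.T D)) = GaussDiagramProof.T D
      rw [GaussDiagramProof.psi_T, GaussDiagramProof.phi_V]
end
end
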